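/- Let (X,T) be a minimal weakly mixing topological dynamical system and let d ≥ 1 be an integer. Then Q^{[d]}(X) = X^{[d]}, and the action of the cube group G^{[d]} on X^{[d]} is minimal, i.e. the G^{[d]}-orbit of every point of X^{[d]} is dense in X^{[d]}. -/

import Mathlib

open Set

/-- The group of self-homeomorphisms of a topological space,
with `(f * g) x = f (g x)`. -/
instance homeomorphGroup {X : Type*} [TopologicalSpace X] : Group (X ≃ₜ X) where
  mul f g := g.trans f
  one := Homeomorph.refl X
  inv := Homeomorph.symm
  mul_assoc f g h := rfl
  one_mul f := by ext x; rfl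
  mul_one f := by ext x; rfl
  inv_mul_cancel f := by ext x; exact f.symm_apply_apply x

/-- `n · ε = n₁ε₁ + ⋯ + n_dε_d`. -/
def nDot {d : ℕ} (n : Fin d → ℤ) (ε : Fin d → Bool) : ℤ :=
  ∑ i, if ε i then n i else 0

/-- The vertex `(0,…,0)` of the cube `{0,1}^d`. -/
def v0 (d : ℕ) : Fin d → Bool := fun _ => false

/-- A topological dynamical system `(X,T)` is minimal if every orbit is dense. -/
def IsMinimalTDS {X : Type*} [TopologicalSpace X] (T : X ≃ₜ X) : Prop :=
  ∀ x : X, Dense (Set.range fun n : ℤ => (T ^ n) x)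

/-- The dynamical parallelepiped `Q^{[d]}(X)`: the closure in `X^{[d]} = X^({0,1}^d)`
of the set of points `(T^{n·ε} x)_{ε ∈ {0,1}^d}`, `x ∈ X`, `n ∈ ℤ^d`. -/
def cubeQ {X : Type*} [TopologicalSpace X] (T : X ≃ₜ X) (d : ℕ) :
    Set ((Fin d → Bool) → X) :=
  closure {y | ∃ (x : X) (n : Fin d → ℤ), y = fun ε => (T ^ nDot n ε) x}

/-- The regionally proximal relation of order `k` (for `k = 0` this is all of `X × X`). -/
def RP {X : Type*} [MetricSpace X] (T : X ≃ₜ X) (k : ℕ) : Set (X × X) :=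
  {p | ∀ δ > 0, ∃ (x' y' : X) (n : Fin k → ℤ),
    dist p.1 x' < δ ∧ dist p.2 y' < δ ∧
    ∀ ε : Fin k → Bool, ε ≠ v0 k →
      dist ((T ^ nDot n ε) x') ((T ^ nDot n ε) y') < δ}

/-- A factor map between topological dynamical systems: a continuous surjection
intertwining the actions. -/
def IsFactorMap {X Z : Type*} [TopologicalSpace X] [TopologicalSpace Z]
    (T : X ≃ₜ X) (S : Z ≃ₜ Z) (π : X → Z) : Prop :=
  Continuous π ∧ Function.Surjective π ∧ ∀ x, π (T x) = S (π x)

/-- The diagonal homeomorphism `T^{[d]} = T × ⋯ × T` of `X^{[d]}`. -/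
def diagHomeo {X : Type*} [TopologicalSpace X] (T : X ≃ₜ X) (d : ℕ) :
    ((Fin d → Bool) → X) ≃ₜ ((Fin d → Bool) → X) :=
  Homeomorph.piCongrRight fun _ : Fin d → Bool => T

/-- `w` is a minimal point of the homeomorphism `S`. -/
def IsMinimalPoint {W : Type*} [TopologicalSpace W] (S : W ≃ₜ W) (w : W) : Prop :=
  ∀ y ∈ closure (Set.range fun n : ℤ => (S ^ n) w),
    closure (Set.range fun n : ℤ => (S ^ n) y)
      = closure (Set.range fun n : ℤ => (S ^ n) w)

/-- The `j`-th face transformation `T_j^{[d]}` of `X^{[d]}`. -/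
def faceHomeo {X : Type*} [TopologicalSpace X] {d : ℕ} (T : X ≃ₜ X) (j : Fin d) :
    ((Fin d → Bool) → X) ≃ₜ ((Fin d → Bool) → X) :=
  Homeomorph.piCongrRight fun ε : Fin d → Bool =>
    if ε j then T else Homeomorph.refl X

/-- The face group `F^{[d]}`: the group of homeomorphisms of `X^{[d]}`
generated by the face transformations. -/
def faceGroup {X : Type*} [TopologicalSpace X] (T : X ≃ₜ X) (d : ℕ) :
    Subgroup (((Fin d → Bool) → X) ≃ₜ ((Fin d → Bool) → X)) :=
  Subgroup.closure (Set.range (faceHomeo (d := d) T))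

/-- The orbit of a point under a group of homeomorphisms. -/
def groupOrbit {W : Type*} [TopologicalSpace W] (G : Subgroup (W ≃ₜ W)) (w : W) : Set W :=
  {y | ∃ g ∈ G, g w = y}

/-- The homeomorphism `id × T_*^{[d]}` of `X^{[d]}`, fixing the `(0,…,0)`-coordinate
and applying `T` to every other coordinate. -/
def idFaceHomeo {X : Type*} [TopologicalSpace X] (T : X ≃ₜ X) (d : ℕ) :
    ((Fin d → Bool) → X) ≃ₜ ((Fin d → Bool) → X) :=
  Homeomorph.piCongrRight fun ε : Fin d → Bool =>
    if ε = v0 d then Homeomorph.refl X else T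

/-- A system `(X,T)` is weakly mixing if `(X × X, T × T)` is topologically transitive. -/
def IsWeaklyMixing {X : Type*} [TopologicalSpace X] (T : X ≃ₜ X) : Prop :=
  ∀ U V : Set (X × X), IsOpen U → IsOpen V → U.Nonempty → V.Nonempty →
    ∃ n : ℤ, (U ∩ (fun p : X × X => ((T ^ n) p.1, (T ^ n) p.2)) ⁻¹' V).Nonempty

/-- The cube group `G^{[d]}`: generated by the face transformations together with the
diagonal homeomorphism `T^{[d]}`. -/
def cubeGroup {X : Type*} [TopologicalSpace X] (T : X ≃ₜ X) (d : ℕ) :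
    Subgroup (((Fin d → Bool) → X) ≃ₜ ((Fin d → Bool) → X)) :=
  Subgroup.closure (Set.range (faceHomeo (d := d) T) ∪ {diagHomeo T d})


set_option linter.unusedSectionVars false
namespace Stmt15Aux

open Function

variable {X : Type*} [MetricSpace X] [CompactSpace X] (T : X ≃ₜ X)

lemma mul_apply' (f g : X ≃ₜ X) (x : X) : (f * g) x = f (g x) := rfl

lemma zpow_add_apply (a b : ℤ) (x : X) : (T ^ (a + b)) x = (T ^ a) ((T ^ b) x) := by
  rw [zpow_add]; rfl

lemma nDot_v0 {d : ℕ} (n : Fin d → ℤ) : nDot n (v0 d) = 0 := by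
  unfold nDot v0; simp

lemma zpow_nDot_v0_apply {d : ℕ} (n : Fin d → ℤ) (x : X) :
    (T ^ nDot n (v0 d)) x = x := by
  rw [nDot_v0, zpow_zero]; rfl

lemma nDot_add {d : ℕ} (n m : Fin d → ℤ) (ε : Fin d → Bool) :
    nDot (n + m) ε = nDot n ε + nDot m ε := by
  unfold nDot
  rw [← Finset.sum_add_distrib]
  refine Finset.sum_congr rfl fun i _ => ?_
  by_cases h : ε i <;> simp [h]

lemma nDot_split {d : ℕ} (n : Fin (d + 1) → ℤ) (ε : Fin (d + 1) → Bool) :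
    nDot n ε = nDot (Fin.init n) (Fin.init ε)
      + (if ε (Fin.last d) then n (Fin.last d) else 0) := by
  unfold nDot
  rw [Fin.sum_univ_castSucc]
  rfl

lemma nDot_snoc {d : ℕ} (n' : Fin d → ℤ) (m : ℤ) (ε' : Fin d → Bool) (b : Bool) :
    nDot (Fin.snoc n' m) (Fin.snoc ε' b) = nDot n' ε' + (if b then m else 0) := by
  rw [nDot_split]
  simp [Fin.init_snoc, Fin.snoc_last]

lemma snoc_true_ne_v0 {d : ℕ} (ε' : Fin d → Bool) :
    (Fin.snoc ε' true : Fin (d + 1) → Bool) ≠ v0 (d + 1) := by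
  intro h
  have := congrFun h (Fin.last d)
  simp [Fin.snoc_last, v0] at this

lemma snoc_false_ne_v0 {d : ℕ} {ε' : Fin d → Bool} (h : ε' ≠ v0 d) :
    (Fin.snoc ε' false : Fin (d + 1) → Bool) ≠ v0 (d + 1) := by
  intro hc
  apply h
  funext i
  have := congrFun hc (Fin.castSucc i)
  simpa [Fin.snoc_castSucc, v0] using this

lemma snoc_false_v0_cases {d : ℕ} {ε' : Fin d → Bool}
    (h : (Fin.snoc ε' false : Fin (d + 1) → Bool) ≠ v0 (d + 1)) : ε' ≠ v0 d := by
  intro hc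
  apply h
  funext i
  induction i using Fin.lastCases with
  | last => simp [Fin.snoc_last, v0]
  | cast j => simp [Fin.snoc_castSucc, hc, v0]


section WM

lemma lemA_fuel (hwm : IsWeaklyMixing T) : ∀ (N : ℕ) (l : List (Set X × Set X)), l.length ≤ N →
    (∀ p ∈ l, IsOpen p.1 ∧ p.1.Nonempty ∧ IsOpen p.2 ∧ p.2.Nonempty) →
    ∃ n : ℤ, ∀ p ∈ l, ∃ x ∈ p.1, (T ^ n) x ∈ p.2 := by
  intro N
  induction N with
  | zero =>
      intro l hl _
      rcases List.eq_nil_of_length_eq_zero (Nat.le_zero.mp hl) with rfl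
      exact ⟨0, fun p hp => absurd hp List.not_mem_nil⟩
  | succ N IH =>
      intro l hl hyp
      match l with
      | [] => exact ⟨0, fun p hp => absurd hp List.not_mem_nil⟩
      | [p] =>
          obtain ⟨hU, hUne, hV, hVne⟩ := hyp p (List.mem_singleton_self p)
          obtain ⟨n, w, hmem⟩ := hwm (p.1 ×ˢ p.1) (p.2 ×ˢ p.2) (hU.prod hU)
            (hV.prod hV) (hUne.prod hUne) (hVne.prod hVne)
          simp only [Set.mem_inter_iff, Set.mem_preimage, Set.mem_prod] at hmem
          refine ⟨n, fun q hq => ?_⟩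
          rcases List.mem_singleton.mp hq with rfl
          exact ⟨w.1, hmem.1.1, hmem.2.1⟩
      | p :: q :: r =>
          obtain ⟨hpU, hpUne, hpV, hpVne⟩ := hyp p (by simp)
          obtain ⟨hqU, hqUne, hqV, hqVne⟩ := hyp q (by simp)
          obtain ⟨t, w, hmem⟩ := hwm (p.1 ×ˢ p.2) (q.1 ×ˢ q.2) (hpU.prod hpV)
            (hqU.prod hqV) (hpUne.prod hpVne) (hqUne.prod hqVne)
          simp only [Set.mem_inter_iff, Set.mem_preimage, Set.mem_prod] at hmem
          obtain ⟨⟨hx1, hy1⟩, hx2, hy2⟩ := hmem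
          set p' : Set X × Set X :=
            (p.1 ∩ (fun z => (T ^ t) z) ⁻¹' q.1, p.2 ∩ (fun z => (T ^ t) z) ⁻¹' q.2) with hp'
          have hlen : (p' :: r).length ≤ N := by
            simp at hl ⊢; omega
          have hyp' : ∀ s ∈ p' :: r, IsOpen s.1 ∧ s.1.Nonempty ∧ IsOpen s.2 ∧ s.2.Nonempty := by
            intro s hs
            rcases List.mem_cons.mp hs with rfl | hs1
            · exact ⟨hpU.inter (hqU.preimage (T ^ t).continuous),
                ⟨w.1, hx1, hx2⟩,
                hpV.inter (hqV.preimage (T ^ t).continuous),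
                ⟨w.2, hy1, hy2⟩⟩
            · exact hyp s (List.mem_cons_of_mem _ (List.mem_cons_of_mem _ hs1))
          obtain ⟨n, hn⟩ := IH (p' :: r) hlen hyp'
          refine ⟨n, fun s hs => ?_⟩
          rcases List.mem_cons.mp hs with rfl | hs1
          · obtain ⟨z, hz, hz2⟩ := hn p' List.mem_cons_self
            exact ⟨z, hz.1, hz2.1⟩
          · rcases List.mem_cons.mp hs1 with rfl | hs2
            · obtain ⟨z, hz, hz2⟩ := hn p' List.mem_cons_self
              refine ⟨(T ^ t) z, hz.2, ?_⟩
              have hcomm : (T ^ n) ((T ^ t) z) = (T ^ t) ((T ^ n) z) := by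
                rw [← zpow_add_apply, ← zpow_add_apply, add_comm]
              rw [hcomm]
              exact hz2.2
            · exact hn s (List.mem_cons_of_mem _ hs2)

lemma lemA (hwm : IsWeaklyMixing T) (l : List (Set X × Set X))
    (hyp : ∀ p ∈ l, IsOpen p.1 ∧ p.1.Nonempty ∧ IsOpen p.2 ∧ p.2.Nonempty) :
    ∃ n : ℤ, ∀ p ∈ l, ∃ x ∈ p.1, (T ^ n) x ∈ p.2 :=
  lemA_fuel T hwm l.length l le_rfl hyp

lemma lemA' (hwm : IsWeaklyMixing T) {ι : Type*} [Fintype ι] (U V : ι → Set X)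
    (hU : ∀ i, IsOpen (U i)) (hUne : ∀ i, (U i).Nonempty)
    (hV : ∀ i, IsOpen (V i)) (hVne : ∀ i, (V i).Nonempty) :
    ∃ n : ℤ, ∀ i, ∃ x ∈ U i, (T ^ n) x ∈ V i := by
  have hyp : ∀ p ∈ (Finset.univ : Finset ι).toList.map fun i => (U i, V i),
      IsOpen p.1 ∧ p.1.Nonempty ∧ IsOpen p.2 ∧ p.2.Nonempty := by
    intro p hp
    simp only [List.mem_map] at hp
    obtain ⟨i, _, rfl⟩ := hp
    exact ⟨hU i, hUne i, hV i, hVne i⟩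
  obtain ⟨n, hn⟩ := lemA T hwm _ hyp
  refine ⟨n, fun i => hn (U i, V i) ?_⟩
  simp only [List.mem_map]
  exact ⟨i, by simp, rfl⟩

lemma lemAthick (hwm : IsWeaklyMixing T) {ι : Type*} [Fintype ι] (U V : ι → Set X)
    (hU : ∀ i, IsOpen (U i)) (hUne : ∀ i, (U i).Nonempty)
    (hV : ∀ i, IsOpen (V i)) (hVne : ∀ i, (V i).Nonempty) (B : Finset ℤ) :
    ∃ N : ℤ, ∀ i, ∀ b ∈ B, ∃ x ∈ U i, (T ^ (b + N)) x ∈ V i := by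
  classical
  obtain ⟨N, hN⟩ := lemA' T hwm (ι := ι × {b // b ∈ B})
    (fun p => U p.1) (fun p => (fun x => (T ^ (p.2 : ℤ)) x) ⁻¹' V p.1)
    (fun p => hU p.1) (fun p => hUne p.1)
    (fun p => (hV p.1).preimage (T ^ (p.2 : ℤ)).continuous)
    (fun p => (hVne p.1).preimage (T ^ (p.2 : ℤ)).surjective)
  refine ⟨N, fun i b hb => ?_⟩
  obtain ⟨x, hx, hx2⟩ := hN (i, ⟨b, hb⟩)
  exact ⟨x, hx, by rw [zpow_add_apply]; exact hx2⟩

end WM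

lemma baseCover (hmin : IsMinimalTDS T) (V : Set X) (hV : IsOpen V) (hne : V.Nonempty) :
    ∃ F : Finset ℤ, ∀ x : X, ∃ f ∈ F, (T ^ f) x ∈ V := by
  have hcov : (Set.univ : Set X) ⊆ ⋃ n : ℤ, (fun x => (T ^ n) x) ⁻¹' V := by
    intro x _
    obtain ⟨y, hy_s, hyV⟩ := (hmin x).exists_mem_open hV hne
    rcases hy_s with ⟨n, rfl⟩
    exact Set.mem_iUnion.2 ⟨n, hyV⟩
  obtain ⟨F, hF⟩ := isCompact_univ.elim_finite_subcover _
    (fun n : ℤ => hV.preimage (T ^ n).continuous) hcov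
  refine ⟨F, fun x => ?_⟩
  obtain ⟨f, hf, hx⟩ := Set.mem_iUnion₂.1 (hF (Set.mem_univ x))
  exact ⟨f, hf, hx⟩

lemma boxLemma {ι : Type*} [Fintype ι] {E : ι → Type*} [∀ i, TopologicalSpace (E i)]
    (O : Set (∀ i, E i)) (hO : IsOpen O) (p : ∀ i, E i) (hp : p ∈ O) :
    ∃ P : ∀ i, Set (E i), (∀ i, IsOpen (P i)) ∧ (∀ i, p i ∈ P i) ∧
      {y : ∀ i, E i | ∀ i, y i ∈ P i} ⊆ O := by
  classical
  obtain ⟨I, u, hu, hsub⟩ := (isOpen_pi_iff.1 hO) p hp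
  refine ⟨fun i => if i ∈ I then u i else Set.univ, fun i => ?_, fun i => ?_, fun y hy => ?_⟩
  · by_cases h : i ∈ I <;> simp [h, (hu i · |>.1)]
  · by_cases h : i ∈ I <;> simp [h, (hu i · |>.2)]
  · apply hsub
    intro i hi
    simpa [Finset.mem_coe.mp hi] using hy i

lemma dense_preimage_homeo {Y : Type*} [TopologicalSpace Y] (h : Y ≃ₜ Y) {s : Set Y}
    (hs : Dense s) : Dense (⇑h ⁻¹' s) := by
  rw [dense_iff_inter_open]
  intro U hU hUne
  obtain ⟨x, hx1, hx2⟩ := (dense_iff_inter_open.mp hs) (⇑h '' U) (h.isOpenMap U hU)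
    (hUne.image h)
  obtain ⟨u, hu, rfl⟩ := hx1
  exact ⟨u, hu, hx2⟩

lemma denseBInter {Y : Type*} [TopologicalSpace Y] {ι : Type*} (s : Finset ι) (f : ι → Set Y)
    (ho : ∀ i ∈ s, IsOpen (f i)) (hd : ∀ i ∈ s, Dense (f i)) : Dense (⋂ i ∈ s, f i) := by
  classical
  induction s using Finset.induction_on with
  | empty => simpa using dense_univ
  | @insert a s hni IH =>
      rw [Finset.set_biInter_insert]
      exact Dense.inter_of_isOpen_left
        (hd a (Finset.mem_insert_self a s))
        (IH (fun i hi => ho i (Finset.mem_insert_of_mem hi))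
            (fun i hi => hd i (Finset.mem_insert_of_mem hi)))
        (ho a (Finset.mem_insert_self a s))

def Dset (d : ℕ) (c : X) (Vc : Set X) (Vt : (Fin d → Bool) → Set X) :
    Set ((Fin d → Bool) → X) :=
  {y | ∃ m : ℤ, (T ^ m) c ∈ Vc ∧ ∀ ε, ε ≠ v0 d → (T ^ m) (y ε) ∈ Vt ε}

lemma Dset_open (d : ℕ) (c : X) (Vc : Set X) (Vt : (Fin d → Bool) → Set X)
    (hVt : ∀ ε, IsOpen (Vt ε)) : IsOpen (Dset T d c Vc Vt) := by
  have heq : Dset T d c Vc Vt =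
      ⋃ m : ℤ, ⋃ (_ : (T ^ m) c ∈ Vc), ⋂ ε, {y | ε ≠ v0 d → (T ^ m) (y ε) ∈ Vt ε} := by
    ext y
    simp only [Dset, Set.mem_setOf_eq, Set.mem_iUnion, Set.mem_iInter]
    constructor
    · rintro ⟨m, h1, h2⟩; exact ⟨m, h1, fun ε hε => h2 ε hε⟩
    · rintro ⟨m, h1, h2⟩; exact ⟨m, h1, fun ε hε => h2 ε hε⟩
  rw [heq]
  refine isOpen_iUnion fun m => isOpen_iUnion fun _ => isOpen_iInter_of_finite fun ε => ?_
  by_cases h : ε = v0 d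
  · have huniv : {y : (Fin d → Bool) → X | ε ≠ v0 d → (T ^ m) (y ε) ∈ Vt ε} = Set.univ := by
      ext y; simp [h]
    rw [huniv]; exact isOpen_univ
  · have hpre : {y : (Fin d → Bool) → X | ε ≠ v0 d → (T ^ m) (y ε) ∈ Vt ε}
        = (fun y : (Fin d → Bool) → X => (T ^ m) (y ε)) ⁻¹' Vt ε := by
      ext y; simp [h]
    rw [hpre]
    exact (hVt ε).preimage ((T ^ m).continuous.comp (continuous_apply ε))

lemma Dset_cyl {d : ℕ} {c : X} {Vc : Set X} {Vt : (Fin d → Bool) → Set X}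
    {y z : (Fin d → Bool) → X} (h : ∀ ε, ε ≠ v0 d → y ε = z ε)
    (hy : y ∈ Dset T d c Vc Vt) : z ∈ Dset T d c Vc Vt := by
  obtain ⟨m, h1, h2⟩ := hy
  exact ⟨m, h1, fun ε hε => h ε hε ▸ h2 ε hε⟩

lemma Dset_dense (hmin : IsMinimalTDS T) (hwm : IsWeaklyMixing T) (d : ℕ) (c : X)
    (Vc : Set X) (Vt : (Fin d → Bool) → Set X)
    (hVc : IsOpen Vc) (hVcne : Vc.Nonempty)
    (hVt : ∀ ε, IsOpen (Vt ε)) (hVtne : ∀ ε, (Vt ε).Nonempty) :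
    Dense (Dset T d c Vc Vt) := by
  rw [dense_iff_inter_open]
  rintro O hO ⟨p, hp⟩
  obtain ⟨P, hPo, hPp, hPsub⟩ := boxLemma O hO p hp
  obtain ⟨F, hF⟩ := baseCover T hmin Vc hVc hVcne
  obtain ⟨N, hN⟩ := lemAthick T hwm P Vt hPo (fun ε => ⟨p ε, hPp ε⟩) hVt hVtne F
  obtain ⟨f, hfF, hfc⟩ := hF ((T ^ N) c)
  choose q hq1 hq2 using fun ε => hN ε f hfF
  classical
  refine ⟨fun ε => if ε = v0 d then p ε else q ε, hPsub fun ε => ?_, f + N, ?_, fun ε hε => ?_⟩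
  · by_cases h : ε = v0 d <;> simp [h, hPp, hq1]
  · rw [zpow_add_apply]; exact hfc
  · simp only [if_neg hε]
    exact hq2 ε

lemma coverSynd (d : ℕ)
    (H : ∀ (w : (Fin d → Bool) → X) (V : (Fin d → Bool) → Set X),
      (∀ ε, IsOpen (V ε)) → (∀ ε, (V ε).Nonempty) →
      ∃ n : Fin d → ℤ, ∀ ε, ε ≠ v0 d → (T ^ nDot n ε) (w ε) ∈ V ε)
    (V : (Fin d → Bool) → Set X) (hVo : ∀ ε, IsOpen (V ε)) (hVne : ∀ ε, (V ε).Nonempty) :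
    ∃ F : Finset (Fin d → ℤ), ∀ y : (Fin d → Bool) → X,
      ∃ f ∈ F, ∀ ε, ε ≠ v0 d → (T ^ nDot f ε) (y ε) ∈ V ε := by
  classical
  set O : (Fin d → ℤ) → Set ((Fin d → Bool) → X) :=
    fun n => ⋂ ε, {y | ε ≠ v0 d → (T ^ nDot n ε) (y ε) ∈ V ε} with hOdef
  have hOopen : ∀ n, IsOpen (O n) := by
    intro n
    refine isOpen_iInter_of_finite fun ε => ?_
    by_cases h : ε = v0 d
    · have huniv : {y : (Fin d → Bool) → X | ε ≠ v0 d → (T ^ nDot n ε) (y ε) ∈ V ε}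
          = Set.univ := by ext y; simp [h]
      rw [huniv]; exact isOpen_univ
    · have hpre : {y : (Fin d → Bool) → X | ε ≠ v0 d → (T ^ nDot n ε) (y ε) ∈ V ε}
          = (fun y : (Fin d → Bool) → X => (T ^ nDot n ε) (y ε)) ⁻¹' V ε := by
        ext y; simp [h]
      rw [hpre]
      exact (hVo ε).preimage ((T ^ nDot n ε).continuous.comp (continuous_apply ε))
  have hcov : (Set.univ : Set ((Fin d → Bool) → X)) ⊆ ⋃ n, O n := by
    intro y _
    obtain ⟨n, hn⟩ := H y V hVo hVne
    exact Set.mem_iUnion.2 ⟨n, Set.mem_iInter.2 fun ε => hn ε⟩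
  obtain ⟨F, hF⟩ := isCompact_univ.elim_finite_subcover O hOopen hcov
  refine ⟨F, fun y => ?_⟩
  obtain ⟨f, hf, hyf⟩ := Set.mem_iUnion₂.1 (hF (Set.mem_univ y))
  exact ⟨f, hf, fun ε hε => (Set.mem_iInter.1 hyf ε) hε⟩

theorem coreM (hmin : IsMinimalTDS T) (hwm : IsWeaklyMixing T) :
    ∀ (d : ℕ) (w : (Fin d → Bool) → X) (V : (Fin d → Bool) → Set X),
      (∀ ε, IsOpen (V ε)) → (∀ ε, (V ε).Nonempty) →
      ∃ n : Fin d → ℤ, ∀ ε, ε ≠ v0 d → (T ^ nDot n ε) (w ε) ∈ V ε := by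
  intro d
  induction d with
  | zero =>
      intro w V _ _
      refine ⟨0, fun ε hε => absurd ?_ hε⟩
      funext i
      exact i.elim0
  | succ d IH =>
      intro w V hVo hVne
      classical
      set c : X := w (Fin.snoc (v0 d) true) with hc
      obtain ⟨F₀, hF₀⟩ := coverSynd T d IH (fun ε' => V (Fin.snoc ε' false))
        (fun ε' => hVo _) (fun ε' => hVne _)
      set D : Set ((Fin d → Bool) → X) :=
        Dset T d c (V (Fin.snoc (v0 d) true)) (fun ε' => V (Fin.snoc ε' true)) with hD
      have hDo : IsOpen D := Dset_open T d _ _ _ (fun ε' => hVo _)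
      have hDd : Dense D := Dset_dense T hmin hwm d _ _ _ (hVo _) (hVne _)
        (fun ε' => hVo _) (fun ε' => hVne _)
      set hβ : (Fin d → ℤ) → (((Fin d → Bool) → X) ≃ₜ ((Fin d → Bool) → X)) :=
        fun β => Homeomorph.piCongrRight fun ε' => T ^ nDot β ε' with hhβ
      have hβapp : ∀ β y ε', (hβ β) y ε' = (T ^ nDot β ε') (y ε') := fun β y ε' => rfl
      set G : Set ((Fin d → Bool) → X) := ⋂ β ∈ F₀, ⇑(hβ β) ⁻¹' D with hG
      have hGo : IsOpen G := isOpen_biInter_finset fun β _ => hDo.preimage (hβ β).continuous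
      have hGd : Dense G := denseBInter F₀ _ (fun β _ => hDo.preimage (hβ β).continuous)
        (fun β _ => dense_preimage_homeo (hβ β) hDd)
      have hXne : Nonempty X := ⟨c⟩
      obtain ⟨g0, hg0⟩ := hGd.nonempty
      set g' : (Fin d → Bool) → X := Function.update g0 (v0 d) c with hg'
      have hg'mem : g' ∈ G := by
        rw [hG, Set.mem_iInter₂] at hg0 ⊢
        intro β hβF
        refine Dset_cyl T (y := (hβ β) g0) ?_ (hg0 β hβF)
        intro ε hε
        rw [hβapp, hβapp, hg', Function.update_of_ne hε]
      obtain ⟨P, hPo, hPp, hPsub⟩ := boxLemma G hGo g' hg'mem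
      obtain ⟨n₀, hn₀⟩ := IH (fun ε' => w (Fin.snoc ε' true)) P hPo
        (fun ε' => ⟨g' ε', hPp ε'⟩)
      set z : (Fin d → Bool) → X := fun ε' => (T ^ nDot n₀ ε') (w (Fin.snoc ε' true)) with hz
      have hzG : z ∈ G := by
        apply hPsub
        intro ε'
        by_cases h : ε' = v0 d
        · subst h
          have h1 : z (v0 d) = c := by
            rw [hz]
            exact zpow_nDot_v0_apply T n₀ _
          have h2 : g' (v0 d) = c := Function.update_self _ _ _
          rw [h1, ← h2]
          exact hPp (v0 d)
        · exact hn₀ ε' h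
      obtain ⟨f, hfF₀, hbot⟩ := hF₀ (fun ε' => (T ^ nDot n₀ ε') (w (Fin.snoc ε' false)))
      have htopD : (hβ f) z ∈ D := Set.mem_iInter₂.1 hzG f hfF₀
      obtain ⟨m, hm0, hm⟩ := htopD
      refine ⟨Fin.snoc (n₀ + f) m, ?_⟩
      intro ε hε
      have hsn : Fin.snoc (Fin.init ε) (ε (Fin.last d)) = ε := Fin.snoc_init_self ε
      have hit : (if (true : Bool) then m else 0) = m := rfl
      have hif : (if (false : Bool) then m else 0) = 0 := rfl
      rcases Bool.eq_false_or_eq_true (ε (Fin.last d)) with hb | hb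
      all_goals rw [hb] at hsn
      · -- top block (ε last = true)
        rw [← hsn, nDot_snoc, hit]
        by_cases h0 : Fin.init ε = v0 d
        · rw [h0, nDot_v0, zero_add]
          simpa using hm0
        · have hmε := hm (Fin.init ε) h0
          rw [hβapp, hz] at hmε
          have hexp : nDot (n₀ + f) (Fin.init ε) + m
              = m + (nDot f (Fin.init ε) + nDot n₀ (Fin.init ε)) := by
            rw [nDot_add]; ring
          rw [hexp, zpow_add_apply, zpow_add_apply]
          simpa using hmε
      · -- bottom block (ε last = false)
        have hε' : Fin.init ε ≠ v0 d := by
          apply snoc_false_v0_cases (d := d)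
          rw [hsn]
          exact hε
        rw [← hsn, nDot_snoc, hif, add_zero, nDot_add,
          add_comm (nDot n₀ (Fin.init ε)) (nDot f (Fin.init ε)), zpow_add_apply]
        simpa using hbot (Fin.init ε) hε'
lemma mainExist (hmin : IsMinimalTDS T) (hwm : IsWeaklyMixing T) (d : ℕ)
    (w : (Fin d → Bool) → X) (V : (Fin d → Bool) → Set X)
    (hVo : ∀ ε, IsOpen (V ε)) (hVne : ∀ ε, (V ε).Nonempty) :
    ∃ (k : ℤ) (n : Fin d → ℤ), ∀ ε, (T ^ (k + nDot n ε)) (w ε) ∈ V ε := by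
  classical
  have hXne : Nonempty X := ⟨w (v0 d)⟩
  set w' : (Fin (d + 1) → Bool) → X := fun ε => w (Fin.init ε) with hw'
  set V' : (Fin (d + 1) → Bool) → Set X :=
    fun ε => if ε (Fin.last d) = true then V (Fin.init ε) else Set.univ with hV'
  have hV'o : ∀ ε, IsOpen (V' ε) := by
    intro ε
    rw [hV']
    by_cases h : ε (Fin.last d) = true <;> simp [h, hVo]
  have hV'ne : ∀ ε, (V' ε).Nonempty := by
    intro ε
    rw [hV']
    by_cases h : ε (Fin.last d) = true <;> simp [h, hVne, Set.univ_nonempty]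
  obtain ⟨n, hn⟩ := coreM T hmin hwm (d + 1) w' V' hV'o hV'ne
  refine ⟨n (Fin.last d), Fin.init n, fun ε => ?_⟩
  have h1 := hn (Fin.snoc ε true) (snoc_true_ne_v0 ε)
  rw [nDot_split] at h1
  simp only [Fin.init_snoc, Fin.snoc_last, if_pos rfl, hw', hV'] at h1
  rw [add_comm] at h1
  simpa using h1

def piHom (d : ℕ) : ((Fin d → Bool) → X ≃ₜ X) →* (((Fin d → Bool) → X) ≃ₜ ((Fin d → Bool) → X)) where
  toFun F := Homeomorph.piCongrRight F
  map_one' := by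
    apply Homeomorph.toEquiv_injective
    apply Equiv.ext
    intro x
    rfl
  map_mul' F G := by
    apply Homeomorph.toEquiv_injective
    apply Equiv.ext
    intro x
    rfl

lemma piHom_apply (d : ℕ) (F : (Fin d → Bool) → X ≃ₜ X) (y : (Fin d → Bool) → X) :
    (piHom (X := X) d F) y = fun ε => F ε (y ε) := rfl

lemma listZpow (l : List ℤ) : (l.map fun a => T ^ a).prod = T ^ l.sum := by
  induction l with
  | nil => simp
  | cons a l IH => simp [IH, zpow_add]

lemma gmem_apply (d : ℕ) (k : ℤ) (n : Fin d → ℤ) :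
    ∃ g ∈ cubeGroup T d, ∀ w : (Fin d → Bool) → X,
      g w = fun ε => (T ^ (k + nDot n ε)) (w ε) := by
  classical
  have h1 : (diagHomeo T d) ∈ cubeGroup T d :=
    Subgroup.subset_closure (Set.mem_union_right _ rfl)
  have h2 : ((List.finRange d).map fun j => (faceHomeo T j) ^ (n j)).prod ∈ cubeGroup T d := by
    apply list_prod_mem
    intro x hx
    simp only [List.mem_map] at hx
    obtain ⟨j, _, rfl⟩ := hx
    exact zpow_mem (Subgroup.subset_closure (Set.mem_union_left _ (Set.mem_range_self j))) (n j)
  refine ⟨(diagHomeo T d) ^ k *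
    ((List.finRange d).map fun j => (faceHomeo T j) ^ (n j)).prod,
    mul_mem (zpow_mem h1 k) h2, ?_⟩
  intro w
  set a : (Fin d → Bool) → X ≃ₜ X := fun _ => T with ha
  set b : Fin d → ((Fin d → Bool) → X ≃ₜ X) :=
    fun j ε => if ε j then T else Homeomorph.refl X with hb
  have hc : a ^ k * ((List.finRange d).map fun j => (b j) ^ (n j)).prod
      = fun ε => T ^ (k + nDot n ε) := by
    funext ε
    set e := Pi.evalMonoidHom (fun _ : Fin d → Bool => X ≃ₜ X) ε with he
    have h1' : (a ^ k * ((List.finRange d).map fun j => (b j) ^ (n j)).prod) ε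
        = e (a ^ k) * e (((List.finRange d).map fun j => (b j) ^ (n j)).prod) := rfl
    rw [h1', map_zpow, MonoidHom.map_list_prod, List.map_map]
    have h2' : ((List.finRange d).map (e ∘ fun j => (b j) ^ (n j)))
        = (List.finRange d).map fun j => T ^ (if ε j then n j else 0) := by
      apply List.map_congr_left
      intro j _
      show e ((b j) ^ (n j)) = T ^ (if ε j then n j else 0)
      rw [map_zpow]
      show (if ε j then T else Homeomorph.refl X) ^ (n j) = T ^ (if ε j then n j else 0)
      by_cases h : ε j
      · simp [h]
      · have hrefl : (Homeomorph.refl X : X ≃ₜ X) = 1 := rfl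
        simp [h, hrefl]
    rw [h2']
    have ea : e a = T := rfl
    have h3 : ((List.finRange d).map fun j => if ε j then n j else (0 : ℤ)).sum
        = nDot n ε := by
      rw [nDot, Fin.sum_univ_def]
    have hprod : ((List.finRange d).map fun j => T ^ (if ε j then n j else (0 : ℤ))).prod
        = T ^ ((List.finRange d).map fun j => (if ε j then n j else (0 : ℤ))).sum := by
      rw [← listZpow, List.map_map]
      rfl
    rw [hprod, ea, ← zpow_add, h3]
  have key : (diagHomeo T d) ^ k *
      ((List.finRange d).map fun j => (faceHomeo T j) ^ (n j)).prod
      = piHom (X := X) d fun ε => T ^ (k + nDot n ε) := by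
    have hda : diagHomeo T d = piHom (X := X) d a := rfl
    have h4 : ((List.finRange d).map fun j => (faceHomeo T j) ^ (n j))
        = ((List.finRange d).map fun j => (b j) ^ (n j)).map (piHom (X := X) d) := by
      rw [List.map_map]
      apply List.map_congr_left
      intro j _
      show (faceHomeo T j) ^ (n j) = piHom (X := X) d ((b j) ^ (n j))
      rw [map_zpow]
      rfl
    rw [hda, ← map_zpow, h4, ← MonoidHom.map_list_prod, ← map_mul, hc]
  rw [key]
  rfl

end Stmt15Aux

/-- for a minimal weakly mixing system, `Q^{[d]}(X) = X^{[d]}` and the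
action of the cube group `G^{[d]}` on `X^{[d]}` is minimal. -/
theorem statement15 {X : Type*} [MetricSpace X] [CompactSpace X]
    (T : X ≃ₜ X) (hmin : IsMinimalTDS T) (hwm : IsWeaklyMixing T)
    (d : ℕ) (hd : 1 ≤ d) :
    cubeQ T d = Set.univ ∧
      ∀ w : (Fin d → Bool) → X, Dense (groupOrbit (cubeGroup T d) w) := by
  classical
  by_cases hX : Nonempty X
  · obtain ⟨x₀⟩ := hX
    have main : ∀ (w : (Fin d → Bool) → X) (O : Set ((Fin d → Bool) → X)),
        IsOpen O → O.Nonempty →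
        ∃ (k : ℤ) (n : Fin d → ℤ), (fun ε => (T ^ (k + nDot n ε)) (w ε)) ∈ O := by
      intro w O hO hOne
      obtain ⟨p, hp⟩ := hOne
      obtain ⟨P, hPo, hPp, hPsub⟩ := Stmt15Aux.boxLemma O hO p hp
      obtain ⟨k, n, h⟩ := Stmt15Aux.mainExist T hmin hwm d w P hPo (fun ε => ⟨p ε, hPp ε⟩)
      exact ⟨k, n, hPsub h⟩
    constructor
    · have hdense : Dense {y : (Fin d → Bool) → X |
          ∃ (x : X) (n : Fin d → ℤ), y = fun ε => (T ^ nDot n ε) x} := by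
        rw [dense_iff_inter_open]
        intro O hO hOne
        obtain ⟨k, n, hkn⟩ := main (fun _ => x₀) O hO hOne
        refine ⟨_, hkn, ⟨(T ^ k) x₀, n, ?_⟩⟩
        funext ε
        rw [← Stmt15Aux.zpow_add_apply, add_comm]
      unfold cubeQ
      exact hdense.closure_eq
    · intro w
      rw [dense_iff_inter_open]
      intro O hO hOne
      obtain ⟨k, n, hkn⟩ := main w O hO hOne
      obtain ⟨g, hg, hgw⟩ := Stmt15Aux.gmem_apply T d k n
      refine ⟨g w, ?_, g, hg, rfl⟩
      rw [hgw w]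
      exact hkn
  · have hXe : IsEmpty X := not_nonempty_iff.mp hX
    have hY : IsEmpty ((Fin d → Bool) → X) := ⟨fun y => hXe.false (y (v0 d))⟩
    constructor
    · apply Set.eq_univ_of_forall
      intro y
      exact (hY.false y).elim
    · intro w
      exact (hY.false w).elim
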